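/- Let f, g : ℝ → ℝ be piecewise linear functions, with f piecewise linear with at most p pieces and g piecewise linear with at most q pieces, and suppose g is monotone (either monotonically nondecreasing on ℝ or monotonically nonincreasing on ℝ). Then the composition h(x) = f(g(x)) is piecewise linear with at most p + q pieces. -/

import Mathlib

/-- `f : ℝ → ℝ` is piecewise linear with at most `k` pieces: there are
breakpoints `c 0 ≤ c 1 ≤ … ≤ c (k-2)` such that on each of the `k` intervals
`(-∞, c 0], [c 0, c 1], …, [c (k-2), ∞)` the function `f` agrees with some
affine function `x ↦ a * x + b`. -/
def PiecewiseAffineWith (f : ℝ → ℝ) (k : ℕ) : Prop :=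
  0 < k ∧ ∃ c : Fin (k - 1) → ℝ, Monotone c ∧
    ∀ j : Fin k, ∃ a b : ℝ, ∀ y : ℝ,
      (∀ i : Fin (k - 1), (i : ℕ) < (j : ℕ) → c i ≤ y) →
      (∀ i : Fin (k - 1), (j : ℕ) ≤ (i : ℕ) → y ≤ c i) →
      f y = a * y + b

lemma lower_card {n : ℕ} (S : Finset (Fin n))
    (hS : ∀ i j : Fin n, i ≤ j → j ∈ S → i ∈ S) (i : Fin n) :
    (i : ℕ) < S.card ↔ i ∈ S := by
  constructor
  · intro h
    by_contra hi
    have hsub : S ⊆ Finset.Iio i := by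
      intro j hj
      simp only [Finset.mem_Iio]
      by_contra hji
      exact hi (hS i j (le_of_not_gt hji) hj)
    have := Finset.card_le_card hsub
    rw [Fin.card_Iio] at this
    omega
  · intro h
    have hsub : Finset.Iic i ⊆ S := fun j hj => hS j i (Finset.mem_Iic.mp hj) h
    have := Finset.card_le_card hsub
    rw [Fin.card_Iic] at this
    omega

lemma pa_continuous {g : ℝ → ℝ} {q : ℕ} (h : PiecewiseAffineWith g q) :
    Continuous g := by
  classical
  obtain ⟨hq, d, hd, hpiece⟩ := h
  choose a b hab using hpiece
  rw [continuous_iff_continuousAt]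
  intro x
  rw [continuousAt_iff_continuous_left_right]
  constructor
  · -- left-continuity, on Iic x
    set S := Finset.univ.filter (fun i : Fin (q-1) => d i < x) with hSdef
    have hSlow : ∀ i j : Fin (q-1), i ≤ j → j ∈ S → i ∈ S := by
      intro i j hij hj
      simp only [hSdef, Finset.mem_filter, Finset.mem_univ, true_and] at hj ⊢
      exact lt_of_le_of_lt (hd hij) hj
    have hcard : S.card < q := by
      have h1 : S.card ≤ Fintype.card (Fin (q-1)) := Finset.card_le_univ S
      simp only [Fintype.card_fin] at h1
      omega
    set n : Fin q := ⟨S.card, hcard⟩ with hn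
    set L : ℝ := if hne : S.Nonempty then S.sup' hne d else x - 1 with hL
    have hLx : L < x := by
      rw [hL]
      split
      · rw [Finset.sup'_lt_iff]
        intro i hi
        simp only [hSdef, Finset.mem_filter, Finset.mem_univ, true_and] at hi
        exact hi
      · linarith
    have key : ∀ y ∈ Set.Icc L x, g y = a n * y + b n := by
      intro y hy
      apply hab
      · intro i hi
        have hiS : i ∈ S := (lower_card S hSlow i).mp hi
        have hdL : d i ≤ L := by
          rw [hL]
          rw [dif_pos ⟨i, hiS⟩]
          exact Finset.le_sup' d hiS
        exact le_trans hdL hy.1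
      · intro i hi
        have hiS : i ∉ S := by
          intro hmem
          have h2 := (lower_card S hSlow i).mpr hmem
          have h3 : (n : ℕ) = S.card := rfl
          omega
        simp only [hSdef, Finset.mem_filter, Finset.mem_univ, true_and, not_lt] at hiS
        exact le_trans hy.2 hiS
    have hmem : Set.Icc L x ∈ nhdsWithin x (Set.Iic x) := Icc_mem_nhdsLE hLx
    have hcw : ContinuousWithinAt (fun y => a n * y + b n) (Set.Iic x) x :=
      (Continuous.continuousWithinAt ((continuous_const.mul continuous_id').add continuous_const))
    exact hcw.congr_of_eventuallyEq
      (Filter.eventuallyEq_of_mem hmem (fun y hy => key y hy))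
      (key x ⟨le_of_lt hLx, le_refl x⟩)
  · -- right-continuity, on Ici x
    set S := Finset.univ.filter (fun i : Fin (q-1) => d i ≤ x) with hSdef
    have hSlow : ∀ i j : Fin (q-1), i ≤ j → j ∈ S → i ∈ S := by
      intro i j hij hj
      simp only [hSdef, Finset.mem_filter, Finset.mem_univ, true_and] at hj ⊢
      exact le_trans (hd hij) hj
    have hcard : S.card < q := by
      have h1 : S.card ≤ Fintype.card (Fin (q-1)) := Finset.card_le_univ S
      simp only [Fintype.card_fin] at h1
      omega
    set n : Fin q := ⟨S.card, hcard⟩ with hn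
    set T := Finset.univ.filter (fun i : Fin (q-1) => x < d i) with hTdef
    set M : ℝ := if hne : T.Nonempty then T.inf' hne d else x + 1 with hM
    have hxM : x < M := by
      rw [hM]
      split
      · rw [Finset.lt_inf'_iff]
        intro i hi
        simp only [hTdef, Finset.mem_filter, Finset.mem_univ, true_and] at hi
        exact hi
      · linarith
    have key : ∀ y ∈ Set.Icc x M, g y = a n * y + b n := by
      intro y hy
      apply hab
      · intro i hi
        have hiS : i ∈ S := (lower_card S hSlow i).mp hi
        simp only [hSdef, Finset.mem_filter, Finset.mem_univ, true_and] at hiS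
        exact le_trans hiS hy.1
      · intro i hi
        have hiS : i ∉ S := by
          intro hmem
          have h2 := (lower_card S hSlow i).mpr hmem
          have h3 : (n : ℕ) = S.card := rfl
          omega
        simp only [hSdef, Finset.mem_filter, Finset.mem_univ, true_and, not_le] at hiS
        have hiT : i ∈ T := by
          simp only [hTdef, Finset.mem_filter, Finset.mem_univ, true_and]
          exact hiS
        have hMd : M ≤ d i := by
          rw [hM, dif_pos ⟨i, hiT⟩]
          exact Finset.inf'_le d hiT
        exact le_trans hy.2 hMd
    have hmem : Set.Icc x M ∈ nhdsWithin x (Set.Ici x) := Icc_mem_nhdsGE hxM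
    have hcw : ContinuousWithinAt (fun y => a n * y + b n) (Set.Ici x) x :=
      (Continuous.continuousWithinAt ((continuous_const.mul continuous_id').add continuous_const))
    exact hcw.congr_of_eventuallyEq
      (Filter.eventuallyEq_of_mem hmem (fun y hy => key y hy))
      (key x ⟨le_refl x, le_of_lt hxM⟩)

lemma comp_mono {f g : ℝ → ℝ} {p q : ℕ}
    (hfp : PiecewiseAffineWith f p) (hgq : PiecewiseAffineWith g q)
    (hg : Monotone g) : PiecewiseAffineWith (fun x => f (g x)) (p + q) := by
  classical
  have hcont : Continuous g := pa_continuous hgq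
  obtain ⟨hp, c, hc, hf⟩ := hfp
  obtain ⟨hq, d, hd, hgp⟩ := hgq
  choose A B hAB using hf
  choose a b hab using hgp
  -- crossing points for each level `c i`
  have tdef : ∀ i : Fin (p-1), ∃ t : ℝ, (∃ x, g x = c i) → g t = c i := by
    intro i
    by_cases h : ∃ x, g x = c i
    · exact ⟨h.choose, fun _ => h.choose_spec⟩
    · exact ⟨0, fun h' => absurd h' h⟩
  choose t ht using tdef
  have hN : p + q - 1 = (q - 1) + (p - 1) + 1 := by omega
  -- the merged breakpoint family
  set v : Fin (p + q - 1) → ℝ := fun k =>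
    if hk : (k : ℕ) < q - 1 then d ⟨k, hk⟩
    else if hk2 : (k : ℕ) - (q - 1) < p - 1 then t ⟨(k : ℕ) - (q - 1), hk2⟩
    else 0 with hv
  set e : Fin (p + q - 1) → ℝ := v ∘ Tuple.sort v with he
  have hemono : Monotone e := Tuple.monotone_sort v
  have hed : ∀ i : Fin (q-1), ∃ k : Fin (p + q - 1), e k = d i := by
    intro i
    have hilt : (i : ℕ) < p + q - 1 := by omega
    refine ⟨(Tuple.sort v).symm ⟨i, hilt⟩, ?_⟩
    have : e ((Tuple.sort v).symm ⟨i, hilt⟩) = v ⟨i, hilt⟩ := by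
      rw [he]
      simp [Function.comp, Equiv.apply_symm_apply]
    rw [this, hv]
    simp only []
    rw [dif_pos (show ((⟨(i : ℕ), hilt⟩ : Fin (p+q-1)) : ℕ) < q - 1 from i.isLt)]
  have het : ∀ i : Fin (p-1), ∃ k : Fin (p + q - 1), e k = t i := by
    intro i
    have hilt : q - 1 + (i : ℕ) < p + q - 1 := by omega
    refine ⟨(Tuple.sort v).symm ⟨q - 1 + (i : ℕ), hilt⟩, ?_⟩
    have : e ((Tuple.sort v).symm ⟨q - 1 + (i : ℕ), hilt⟩) = v ⟨q - 1 + (i : ℕ), hilt⟩ := by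
      rw [he]
      simp [Function.comp, Equiv.apply_symm_apply]
    rw [this, hv]
    simp only []
    rw [dif_neg (by omega), dif_pos (by omega)]
    congr 1
    ext
    simp
  refine ⟨by omega, e, hemono, ?_⟩
  intro j
  set R : ℝ → Prop := fun x =>
    (∀ k : Fin (p + q - 1), (k : ℕ) < (j : ℕ) → e k ≤ x) ∧
    (∀ k : Fin (p + q - 1), (j : ℕ) ≤ (k : ℕ) → x ≤ e k) with hR
  -- dichotomies
  have dichD : ∀ i : Fin (q-1),
      (∀ x, R x → d i ≤ x) ∨ (∀ x, R x → x ≤ d i) := by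
    intro i
    by_contra hcon
    push_neg at hcon
    obtain ⟨⟨x1, hR1, hx1⟩, x2, hR2, hx2⟩ := hcon
    obtain ⟨k, hk⟩ := hed i
    rcases lt_or_ge (k : ℕ) (j : ℕ) with hkj | hkj
    · have := hR1.1 k hkj
      rw [hk] at this
      linarith
    · have := hR2.2 k hkj
      rw [hk] at this
      linarith
  have dichC : ∀ i : Fin (p-1),
      (∀ x, R x → c i ≤ g x) ∨ (∀ x, R x → g x ≤ c i) := by
    intro i
    by_contra hcon
    push_neg at hcon
    obtain ⟨⟨x1, hR1, hx1⟩, x2, hR2, hx2⟩ := hcon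
    -- g x1 < c i < g x2
    have hx12 : x1 ≤ x2 := by
      by_contra hlt
      push_neg at hlt
      have := hg hlt.le
      linarith
    have hcross : ∃ z, g z = c i := by
      have hsub := intermediate_value_Icc hx12 hcont.continuousOn
      have hmem : c i ∈ Set.Icc (g x1) (g x2) := ⟨hx1.le, hx2.le⟩
      obtain ⟨z, _, hz⟩ := hsub hmem
      exact ⟨z, hz⟩
    have hti : g (t i) = c i := ht i hcross
    obtain ⟨k, hk⟩ := het i
    rcases lt_or_ge (k : ℕ) (j : ℕ) with hkj | hkj
    · have h1 : t i ≤ x1 := by rw [← hk]; exact hR1.1 k hkj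
      have := hg h1
      rw [hti] at this
      linarith
    · have h1 : x2 ≤ t i := by rw [← hk]; exact hR2.2 k hkj
      have := hg h1
      rw [hti] at this
      linarith
  -- piece selection
  set Sf := Finset.univ.filter (fun i : Fin (p-1) => ∀ x, R x → c i ≤ g x) with hSf
  set Sg := Finset.univ.filter (fun i : Fin (q-1) => ∀ x, R x → d i ≤ x) with hSg
  have hSflow : ∀ i i' : Fin (p-1), i ≤ i' → i' ∈ Sf → i ∈ Sf := by
    intro i i' hii' hmem
    simp only [hSf, Finset.mem_filter, Finset.mem_univ, true_and] at hmem ⊢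
    exact fun x hx => le_trans (hc hii') (hmem x hx)
  have hSglow : ∀ i i' : Fin (q-1), i ≤ i' → i' ∈ Sg → i ∈ Sg := by
    intro i i' hii' hmem
    simp only [hSg, Finset.mem_filter, Finset.mem_univ, true_and] at hmem ⊢
    exact fun x hx => le_trans (hd hii') (hmem x hx)
  have hmlt : Sf.card < p := by
    have h1 : Sf.card ≤ Fintype.card (Fin (p-1)) := Finset.card_le_univ Sf
    simp only [Fintype.card_fin] at h1
    omega
  have hnlt : Sg.card < q := by
    have h1 : Sg.card ≤ Fintype.card (Fin (q-1)) := Finset.card_le_univ Sg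
    simp only [Fintype.card_fin] at h1
    omega
  set m : Fin p := ⟨Sf.card, hmlt⟩ with hm
  set n : Fin q := ⟨Sg.card, hnlt⟩ with hn
  refine ⟨A m * a n, A m * b n + B m, ?_⟩
  intro y hyl hyu
  have hyR : R y := ⟨hyl, hyu⟩
  have hPg : g y = a n * y + b n := by
    apply hab
    · intro i hi
      have hiS : i ∈ Sg := (lower_card Sg hSglow i).mp hi
      simp only [hSg, Finset.mem_filter, Finset.mem_univ, true_and] at hiS
      exact hiS y hyR
    · intro i hi
      have hiS : i ∉ Sg := by
        intro hmem
        have h2 := (lower_card Sg hSglow i).mpr hmem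
        have h3 : (n : ℕ) = Sg.card := rfl
        omega
      rcases dichD i with hcase | hcase
      · exact absurd (by
          simp only [hSg, Finset.mem_filter, Finset.mem_univ, true_and]
          exact hcase) hiS
      · exact hcase y hyR
  have hPf : f (g y) = A m * (g y) + B m := by
    apply hAB
    · intro i hi
      have hiS : i ∈ Sf := (lower_card Sf hSflow i).mp hi
      simp only [hSf, Finset.mem_filter, Finset.mem_univ, true_and] at hiS
      exact hiS y hyR
    · intro i hi
      have hiS : i ∉ Sf := by
        intro hmem
        have h2 := (lower_card Sf hSflow i).mpr hmem
        have h3 : (m : ℕ) = Sf.card := rfl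
        omega
      rcases dichC i with hcase | hcase
      · exact absurd (by
          simp only [hSf, Finset.mem_filter, Finset.mem_univ, true_and]
          exact hcase) hiS
      · exact hcase y hyR
  show f (g y) = A m * a n * y + (A m * b n + B m)
  rw [hPf, hPg]
  ring

lemma pa_comp_neg {f : ℝ → ℝ} {p : ℕ} (h : PiecewiseAffineWith f p) :
    PiecewiseAffineWith (fun y => f (-y)) p := by
  obtain ⟨hp, c, hc, hf⟩ := h
  refine ⟨hp, fun i => -(c i.rev), ?_, ?_⟩
  · intro i i' hii'
    have h1 : i'.rev ≤ i.rev := Fin.rev_le_rev.mpr hii'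
    simpa using hc h1
  · intro j
    obtain ⟨a, b, hj⟩ := hf j.rev
    refine ⟨-a, b, ?_⟩
    intro y h1 h2
    have key : f (-y) = a * (-y) + b := by
      apply hj
      · intro i hi
        -- hi : (i:ℕ) < (j.rev:ℕ); want c i ≤ -y
        have hle : (j : ℕ) ≤ ((i.rev : Fin (p-1)) : ℕ) := by
          have h3 := i.isLt
          have h4 := j.isLt
          rw [Fin.val_rev] at hi ⊢
          omega
        have h2' : y ≤ -(c i) := by simpa using h2 i.rev hle
        linarith
      · intro i hi
        -- hi : (j.rev:ℕ) ≤ (i:ℕ); want -y ≤ c i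
        have hlt : ((i.rev : Fin (p-1)) : ℕ) < (j : ℕ) := by
          have h3 := i.isLt
          have h4 := j.isLt
          rw [Fin.val_rev] at hi ⊢
          omega
        have h1' : -(c i) ≤ y := by simpa using h1 i.rev hlt
        linarith
    show f (-y) = -a * y + b
    rw [key]
    ring

lemma pa_neg {g : ℝ → ℝ} {q : ℕ} (h : PiecewiseAffineWith g q) :
    PiecewiseAffineWith (fun x => -(g x)) q := by
  obtain ⟨hq, d, hd, hgp⟩ := h
  refine ⟨hq, d, hd, fun j => ?_⟩
  obtain ⟨a, b, hj⟩ := hgp j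
  exact ⟨-a, -b, fun y h1 h2 => by show -(g y) = -a*y + -b; rw [hj y h1 h2]; ring⟩

/-- if `f` is piecewise linear with at most `p` pieces, `g` is
piecewise linear with at most `q` pieces, and `g` is monotone (nondecreasing
or nonincreasing on all of `ℝ`), then `f ∘ g` is piecewise linear with at
most `p + q` pieces. -/
theorem comp_piecewise_linear_monotone (f g : ℝ → ℝ) (p q : ℕ)
    (hfp : PiecewiseAffineWith f p) (hgq : PiecewiseAffineWith g q)
    (hg : Monotone g ∨ Antitone g) :
    PiecewiseAffineWith (fun x : ℝ => f (g x)) (p + q) := by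
  rcases hg with hmono | hanti
  · exact comp_mono hfp hgq hmono
  · have h4 := comp_mono (pa_comp_neg hfp) (pa_neg hgq)
      (fun x y hxy => neg_le_neg (hanti hxy))
    have heq : (fun x : ℝ => f (g x))
        = (fun x : ℝ => (fun y => f (-y)) ((fun x : ℝ => -(g x)) x)) := by
      funext x
      simp
    rw [heq]
    exact h4
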